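/- arXiv:2602.18655 — 2 statements merged into one kernel-verified Lean document; each statement's English description precedes it below -/
import Mathlib

section
/- (Proposition 1.) Let m be a positive natural number, let F : ℝ^m → ℝ^m be differentiable, let x̄ ∈ ℝ^m, and let K be a continuous linear map on ℝ^m with ⟨K v, v⟩ ≥ λ ‖v‖² for all v, for some λ > 0. Suppose q : ℝ → ℝ^m is differentiable, the Fréchet derivative J(q(t)) of F at q(t) is invertible for all t, and q'(t) = (J(q(t)))⁻¹ (K (x̄ − F(q(t)))). Then for all t ≥ 0, ‖x̄ − F(q(t))‖ ≤ exp(−λ t) · ‖x̄ − F(q(0))‖; in particular F(q(t)) converges to x̄ as t → ∞, so the closed-loop inverse kinematics scheme solves the kinematic inversion problem exponentially fast. -/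
open RealInnerProductSpace

/-- Proposition 1: The closed-loop inverse kinematics scheme
`q'(t) = (J(q(t)))⁻¹ (K (x̄ − F(q(t))))` with positive definite gain `K`
(`⟨K v, v⟩ ≥ λ ‖v‖²`, `λ > 0`) drives the task error to zero exponentially fast:
`‖x̄ − F(q(t))‖ ≤ exp(−λ t) ‖x̄ − F(q(0))‖` for all `t ≥ 0`, and in particular
`F(q(t)) → x̄` as `t → ∞`. -/
theorem clik_solves_kinematic_inversion_exponentially (m : ℕ) (hm : 0 < m)
    (F : EuclideanSpace ℝ (Fin m) → EuclideanSpace ℝ (Fin m))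
    (hF : Differentiable ℝ F)
    (xbar : EuclideanSpace ℝ (Fin m))
    (K : EuclideanSpace ℝ (Fin m) →L[ℝ] EuclideanSpace ℝ (Fin m))
    (lam : ℝ) (hlam : 0 < lam)
    (hK : ∀ v : EuclideanSpace ℝ (Fin m), lam * ‖v‖ ^ 2 ≤ ⟪K v, v⟫)
    (q : ℝ → EuclideanSpace ℝ (Fin m))
    (hq : Differentiable ℝ q)
    (J : ℝ → (EuclideanSpace ℝ (Fin m) ≃L[ℝ] EuclideanSpace ℝ (Fin m)))
    (hJ : ∀ t : ℝ, HasFDerivAt F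
      (J t : EuclideanSpace ℝ (Fin m) →L[ℝ] EuclideanSpace ℝ (Fin m)) (q t))
    (hode : ∀ t : ℝ, HasDerivAt q ((J t).symm (K (xbar - F (q t)))) t) :
    (∀ t : ℝ, 0 ≤ t → ‖xbar - F (q t)‖ ≤ Real.exp (-lam * t) * ‖xbar - F (q 0)‖) ∧
    Filter.Tendsto (fun t => F (q t)) Filter.atTop (nhds xbar) := by
  set e : ℝ → EuclideanSpace ℝ (Fin m) := fun t => xbar - F (q t) with he
  have hde : ∀ t, HasDerivAt e (-(K (e t))) t := by
    intro t
    have h1 : HasDerivAt (fun t => F (q t)) (K (e t)) t := by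
      have h2 := (hJ t).comp_hasDerivAt t (hode t)
      have h3 : K (e t) = (J t) ((J t).symm (K (xbar - F (q t)))) := by
        rw [(J t).apply_symm_apply]
      rw [h3]; exact h2
    have h4 := (hasDerivAt_const t xbar).sub h1
    exact h4.congr_deriv (zero_sub _)
  set g : ℝ → EuclideanSpace ℝ (Fin m) := fun t => Real.exp (lam * t) • e t with hg
  have hdg : ∀ t, HasDerivAt g
      ((lam * Real.exp (lam * t)) • e t + Real.exp (lam * t) • (-(K (e t)))) t := by
    intro t
    have hexp : HasDerivAt (fun t => Real.exp (lam * t)) (lam * Real.exp (lam * t)) t := by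
      have := (Real.hasDerivAt_exp (lam * t)).comp t ((hasDerivAt_id t).const_mul lam)
      exact this.congr_deriv (by simp only [id, mul_one]; ring)
    have := hexp.smul (hde t)
    refine this.congr_deriv ?_
    module
  set φ : ℝ → ℝ := fun t => ⟪g t, g t⟫ with hφdef
  have hdφ : ∀ t, HasDerivAt φ (2 * ⟪(lam * Real.exp (lam * t)) • e t
      + Real.exp (lam * t) • (-(K (e t))), g t⟫) t := by
    intro t
    have := (hdg t).inner ℝ (hdg t)
    refine this.congr_deriv ?_
    rw [real_inner_comm]
    ring
  have hφ' : ∀ t, (2 * ⟪(lam * Real.exp (lam * t)) • e t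
      + Real.exp (lam * t) • (-(K (e t))), g t⟫) ≤ 0 := by
    intro t
    have h1 : ⟪(lam * Real.exp (lam * t)) • e t + Real.exp (lam * t) • (-(K (e t))), g t⟫
        = (Real.exp (lam * t))^2 * (lam * ‖e t‖^2 - ⟪K (e t), e t⟫) := by
      simp only [hg, inner_add_left, real_inner_smul_left, real_inner_smul_right,
        inner_neg_left, real_inner_self_eq_norm_sq]
      ring
    rw [h1]
    have h2 : lam * ‖e t‖^2 - ⟪K (e t), e t⟫ ≤ 0 := by linarith [hK (e t)]
    nlinarith [sq_nonneg (Real.exp (lam * t))]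
  have hanti : Antitone φ := by
    apply antitone_of_deriv_nonpos
    · exact fun t => (hdφ t).differentiableAt
    · intro t
      rw [(hdφ t).deriv]
      exact hφ' t
  have key : ∀ t : ℝ, 0 ≤ t → ‖e t‖ ≤ Real.exp (-lam * t) * ‖e 0‖ := by
    intro t ht
    have h1 : φ t ≤ φ 0 := hanti ht
    have h2 : (Real.exp (lam * t) * ‖e t‖)^2 ≤ ‖e 0‖^2 := by
      have : φ t = (Real.exp (lam * t) * ‖e t‖)^2 := by
        show ⟪g t, g t⟫ = _
        rw [real_inner_self_eq_norm_sq, hg]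
        rw [norm_smul, Real.norm_eq_abs, abs_of_pos (Real.exp_pos _)]
      have h0 : φ 0 = ‖e 0‖^2 := by
        show ⟪g 0, g 0⟫ = _
        rw [real_inner_self_eq_norm_sq, hg]
        simp
      rw [← this, ← h0]; exact h1
    have h3 : Real.exp (lam * t) * ‖e t‖ ≤ ‖e 0‖ := by
      have := Real.sqrt_le_sqrt h2
      rwa [Real.sqrt_sq (by positivity), Real.sqrt_sq (norm_nonneg _)] at this
    have hep := Real.exp_pos (lam * t)
    rw [neg_mul, Real.exp_neg, inv_mul_eq_div, le_div_iff₀ hep]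
    linarith [mul_comm (Real.exp (lam * t)) ‖e t‖ ▸ h3]
  refine ⟨key, ?_⟩
  have hb : Filter.Tendsto (fun t : ℝ => Real.exp (-lam * t) * ‖e 0‖)
      Filter.atTop (nhds 0) := by
    have h1 : Filter.Tendsto (fun t : ℝ => -lam * t) Filter.atTop Filter.atBot := by
      have h0 := (Filter.tendsto_id.const_mul_atTop hlam (f := fun t : ℝ => t))
      have h2 := Filter.tendsto_neg_atTop_atBot.comp h0
      have h3 : (fun t : ℝ => -lam * t) = (Neg.neg ∘ fun t : ℝ => lam * t) := by
        funext t; simp [neg_mul]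
      rw [h3]; exact h2
    have := (Real.tendsto_exp_atBot.comp h1).mul_const ‖e 0‖
    simpa using this
  have hzero : Filter.Tendsto (fun t => ‖F (q t) - xbar‖) Filter.atTop (nhds 0) := by
    apply squeeze_zero' (Filter.Eventually.of_forall fun t => norm_nonneg _) _ hb
    filter_upwards [Filter.eventually_ge_atTop (0:ℝ)] with t ht
    rw [norm_sub_rev]
    exact key t ht
  rw [tendsto_iff_norm_sub_tendsto_zero]
  exact hzero
end

section
/- Let R : ℝ^m × ℝ → ℝ³ be Fréchet differentiable (R(q, s) being the point of the robot centerline at parameter s under actuation q), let x₀ ∈ ℝ³, and let s* : ℝ^m → ℝ be a differentiable map such that for each q, the derivative with respect to s of s ↦ (1/2)‖R(q, s) − x₀‖² vanishes at s = s*(q). Then the closest-point distance task f(q) := (1/2)‖R(q, s*(q)) − x₀‖² is differentiable, and for each index i its i-th partial derivative equals ⟨∂R/∂q_i (q, s*(q)), R(q, s*(q)) − x₀⟩, the Euclidean inner product of the partial derivative of the shape with respect to the i-th actuator, evaluated at the closest point, with the residual vector. -/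
open RealInnerProductSpace

/-- For a differentiable centerline map `R : ℝ^m × ℝ → ℝ³`, a
target `x₀ ∈ ℝ³`, and a differentiable map `s* : ℝ^m → ℝ` at which the
`s`-derivative of `s ↦ (1/2)‖R(q,s) − x₀‖²` vanishes, the closest-point
distance task `f(q) = (1/2)‖R(q, s*(q)) − x₀‖²` is differentiable, and its
`i`-th partial derivative equals `⟨∂R/∂qᵢ (q, s*(q)), R(q, s*(q)) − x₀⟩`. -/
theorem closest_point_distance_task_jacobian (m : ℕ)
    (R : EuclideanSpace ℝ (Fin m) × ℝ → EuclideanSpace ℝ (Fin 3))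
    (hR : Differentiable ℝ R)
    (x₀ : EuclideanSpace ℝ (Fin 3))
    (sstar : EuclideanSpace ℝ (Fin m) → ℝ)
    (hsstar : Differentiable ℝ sstar)
    (hstat : ∀ q : EuclideanSpace ℝ (Fin m),
      deriv (fun s : ℝ => (1 / 2 : ℝ) * ‖R (q, s) - x₀‖ ^ 2) (sstar q) = 0) :
    Differentiable ℝ (fun q => (1 / 2 : ℝ) * ‖R (q, sstar q) - x₀‖ ^ 2) ∧
    ∀ (q : EuclideanSpace ℝ (Fin m)) (i : Fin m),
      fderiv ℝ (fun p => (1 / 2 : ℝ) * ‖R (p, sstar p) - x₀‖ ^ 2) q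
          (EuclideanSpace.single i 1) =
        ⟪fderiv ℝ (fun p => R (p, sstar q)) q (EuclideanSpace.single i 1),
          R (q, sstar q) - x₀⟫ := by
  have hfun : (fun q : EuclideanSpace ℝ (Fin m) => (1 / 2 : ℝ) * ‖R (q, sstar q) - x₀‖ ^ 2)
      = fun q => (1 / 2 : ℝ) * ⟪R (q, sstar q) - x₀, R (q, sstar q) - x₀⟫ := by
    funext q; rw [real_inner_self_eq_norm_sq]
  have hu : ∀ q : EuclideanSpace ℝ (Fin m),
      HasFDerivAt (fun q' : EuclideanSpace ℝ (Fin m) => R (q', sstar q') - x₀)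
      ((fderiv ℝ R (q, sstar q)).comp
        ((ContinuousLinearMap.id ℝ (EuclideanSpace ℝ (Fin m))).prod (fderiv ℝ sstar q))) q := by
    intro q
    have hG : HasFDerivAt (fun q' : EuclideanSpace ℝ (Fin m) => (q', sstar q'))
        ((ContinuousLinearMap.id ℝ (EuclideanSpace ℝ (Fin m))).prod (fderiv ℝ sstar q)) q :=
      HasFDerivAt.prodMk (hasFDerivAt_id q) (hsstar q).hasFDerivAt
    exact (((hR (q, sstar q)).hasFDerivAt.comp q hG).sub_const x₀)
  have hmain : ∀ q : EuclideanSpace ℝ (Fin m),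
      HasFDerivAt (fun q' : EuclideanSpace ℝ (Fin m) => (1 / 2 : ℝ) * ‖R (q', sstar q') - x₀‖ ^ 2)
      ((1/2 : ℝ) • ((fderivInnerCLM ℝ ((R (q, sstar q) - x₀), (R (q, sstar q) - x₀))).comp
        ((((fderiv ℝ R (q, sstar q)).comp
          ((ContinuousLinearMap.id ℝ (EuclideanSpace ℝ (Fin m))).prod (fderiv ℝ sstar q)))).prod
         (((fderiv ℝ R (q, sstar q)).comp
          ((ContinuousLinearMap.id ℝ (EuclideanSpace ℝ (Fin m))).prod (fderiv ℝ sstar q))))))) q := by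
    intro q
    rw [hfun]
    exact ((hu q).inner ℝ (hu q)).const_mul (1/2 : ℝ)
  constructor
  · exact fun q => (hmain q).differentiableAt
  · intro q i
    have hstat' : ⟪fderiv ℝ R (q, sstar q) ((0 : EuclideanSpace ℝ (Fin m)), (1:ℝ)),
        R (q, sstar q) - x₀⟫ = 0 := by
      have hc : HasDerivAt (fun s : ℝ => ((q : EuclideanSpace ℝ (Fin m)), s))
          ((0 : EuclideanSpace ℝ (Fin m)), (1:ℝ)) (sstar q) :=
        HasDerivAt.prodMk (hasDerivAt_const _ q) (hasDerivAt_id _)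
      have hRs : HasDerivAt (fun s : ℝ => R (q, s))
          (fderiv ℝ R (q, sstar q) ((0 : EuclideanSpace ℝ (Fin m)), (1:ℝ))) (sstar q) :=
        (hR (q, sstar q)).hasFDerivAt.comp_hasDerivAt _ hc
      have hus := hRs.sub_const x₀
      have h2 := ((hus.inner ℝ hus).const_mul (1/2 : ℝ))
      have hfun2 : (fun s : ℝ => (1 / 2 : ℝ) * ‖R (q, s) - x₀‖ ^ 2)
          = fun s : ℝ => (1 / 2 : ℝ) * ⟪R (q, s) - x₀, R (q, s) - x₀⟫ := by
        funext s; rw [real_inner_self_eq_norm_sq]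
      have hz := hstat q
      rw [hfun2] at hz
      rw [h2.deriv] at hz
      rw [real_inner_comm] at hz
      linarith [hz]
    rw [(hmain q).fderiv]
    have happ : ((1/2 : ℝ) • ((fderivInnerCLM ℝ ((R (q, sstar q) - x₀), (R (q, sstar q) - x₀))).comp
        ((((fderiv ℝ R (q, sstar q)).comp
          ((ContinuousLinearMap.id ℝ (EuclideanSpace ℝ (Fin m))).prod (fderiv ℝ sstar q)))).prod
         (((fderiv ℝ R (q, sstar q)).comp
          ((ContinuousLinearMap.id ℝ (EuclideanSpace ℝ (Fin m))).prod (fderiv ℝ sstar q)))))))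
        (EuclideanSpace.single i 1)
        = ⟪fderiv ℝ R (q, sstar q)
            ((EuclideanSpace.single i 1 : EuclideanSpace ℝ (Fin m)),
              fderiv ℝ sstar q (EuclideanSpace.single i 1)),
           R (q, sstar q) - x₀⟫ := by
      simp only [ContinuousLinearMap.coe_smul', Pi.smul_apply, ContinuousLinearMap.coe_comp',
        Function.comp_apply, ContinuousLinearMap.prod_apply, ContinuousLinearMap.coe_id', id_eq,
        fderivInnerCLM_apply, smul_eq_mul]
      rw [real_inner_comm]
      ring
    rw [happ]
    have hsplit : ((EuclideanSpace.single i 1 : EuclideanSpace ℝ (Fin m)),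
        fderiv ℝ sstar q (EuclideanSpace.single i 1))
        = ((EuclideanSpace.single i 1 : EuclideanSpace ℝ (Fin m)), (0:ℝ))
          + (fderiv ℝ sstar q (EuclideanSpace.single i 1)) •
              ((0 : EuclideanSpace ℝ (Fin m)), (1:ℝ)) := by
      simp [Prod.ext_iff]
    rw [hsplit, map_add, map_smul, inner_add_left, real_inner_smul_left, hstat']
    have hpart : HasFDerivAt (fun p : EuclideanSpace ℝ (Fin m) => R (p, sstar q))
        ((fderiv ℝ R (q, sstar q)).comp
          ((ContinuousLinearMap.id ℝ (EuclideanSpace ℝ (Fin m))).prod 0)) q := by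
      have hG : HasFDerivAt (fun p : EuclideanSpace ℝ (Fin m) => (p, sstar q))
          ((ContinuousLinearMap.id ℝ (EuclideanSpace ℝ (Fin m))).prod 0) q :=
        HasFDerivAt.prodMk (hasFDerivAt_id q) (hasFDerivAt_const _ q)
      exact (hR (q, sstar q)).hasFDerivAt.comp q hG
    rw [hpart.fderiv]
    simp
end
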